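/- For agents with matroid rank valuations and n ≥ 2, an allocation X is Lorenz dominating with respect to the augmented utility vector (v_i(X_i) + π(i)/n²)_i only if it is Lorenz dominating with respect to the original utility vector (v_i(X_i))_i. -/

import Mathlib

def IsMRF {G : Type*} [DecidableEq G] (v : Finset G → ℕ) : Prop :=
  v ∅ = 0 ∧
  (∀ (S : Finset G) (g : G), v (insert g S) = v S ∨ v (insert g S) = v S + 1) ∧
  (∀ (S T : Finset G) (g : G), S ⊆ T → g ∉ T →
    v (insert g T) + v S ≤ v (insert g S) + v T)

/-- An allocation: bundles are pairwise disjoint. -/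
def IsAlloc {G : Type*} [DecidableEq G] {n : ℕ} (X : Fin n → Finset G) : Prop :=
  ∀ i j, i ≠ j → Disjoint (X i) (X j)

/-- Ascending sort of a rational utility vector. -/
def sortedAscQ {n : ℕ} (u : Fin n → ℚ) : List ℚ :=
  Multiset.sort (Multiset.ofList (List.ofFn u)) (· ≤ ·)

/-- Lorenz domination for rational utility vectors. -/
def LorenzDomQ {n : ℕ} (u w : Fin n → ℚ) : Prop :=
  ∀ k ≤ n, ((sortedAscQ w).take k).sum ≤ ((sortedAscQ u).take k).sum

/-- Ascending sort of a natural-number utility vector. -/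
def sortedAsc {n : ℕ} (u : Fin n → ℕ) : List ℕ :=
  Multiset.sort (Multiset.ofList (List.ofFn u)) (· ≤ ·)

/-- Lorenz domination for natural-number utility vectors. -/
def LorenzDom {n : ℕ} (u w : Fin n → ℕ) : Prop :=
  ∀ k ≤ n, ((sortedAsc w).take k).sum ≤ ((sortedAsc u).take k).sum

/-- The augmented utility vector of an allocation w.r.t. priority `π`. -/
def augUtil {G : Type*} [DecidableEq G] {n : ℕ} (v : Fin n → Finset G → ℕ)
    (π : Equiv.Perm (Fin n)) (X : Fin n → Finset G) : Fin n → ℚ :=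
  fun i => (v i (X i) : ℚ) + ((π i : ℕ) + 1) / (n ^ 2 : ℚ)

/- ### Auxiliary lemmas -/

lemma sort_coe_of_sorted {α : Type*} [LinearOrder α] {l : List α} (h : l.Pairwise (· ≤ ·)) :
    Multiset.sort (↑l : Multiset α) (· ≤ ·) = l :=
  List.Perm.eq_of_pairwise' (Multiset.pairwise_sort _ _) h
    (Multiset.coe_eq_coe.mp (Multiset.sort_eq _ _))

lemma tail_le_tail {α : Type*} [LinearOrder α] {b c : α} {t' m' : Multiset α}
    (hle : c ::ₘ t' ≤ b ::ₘ m') (hbc : b ≤ c) (hct : ∀ x ∈ t', c ≤ x) :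
    t' ≤ m' := by
  classical
  rw [Multiset.le_iff_count] at *
  intro x
  rcases eq_or_ne x b with rfl | hxb
  · rcases eq_or_ne x c with rfl | hxc
    · have := hle x
      simpa using this
    · have hblt : x < c := lt_of_le_of_ne hbc hxc
      have hxt : x ∉ t' := fun hb => absurd (hct x hb) (not_le.mpr hblt)
      simp [Multiset.count_eq_zero_of_notMem hxt]
  · have h1 := hle x
    rw [Multiset.count_cons_of_ne hxb] at h1
    exact le_trans (Multiset.count_le_of_le x (Multiset.le_cons_self t' c)) h1

/-- The sum of the `card t` smallest elements of `m` is at most the sum of any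
submultiset `t ≤ m`. -/
lemma preSum_le {α : Type*} [AddCommMonoid α] [LinearOrder α] [IsOrderedAddMonoid α] :
    ∀ (N : ℕ) (t m : Multiset α), Multiset.card m ≤ N → t ≤ m →
      ((Multiset.sort m (· ≤ ·)).take (Multiset.card t)).sum ≤ t.sum := by
  intro N
  induction N with
  | zero =>
    intro t m hm ht
    have hm0 : m = 0 := Multiset.card_eq_zero.mp (Nat.le_zero.mp hm)
    subst hm0
    have ht0 : t = 0 := Multiset.le_zero.mp ht
    subst ht0
    simp
  | succ N ih =>
    intro t m hm ht
    rcases eq_or_ne t 0 with rfl | ht0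
    · simp
    have hm0 : m ≠ 0 := fun h => ht0 (Multiset.le_zero.mp (h ▸ ht))
    obtain ⟨b, lm', hsm⟩ : ∃ b lm', Multiset.sort m (· ≤ ·) = b :: lm' := by
      cases hsm : Multiset.sort m (· ≤ ·) with
      | nil =>
        exfalso; apply hm0
        have := Multiset.sort_eq m (· ≤ ·)
        rw [hsm] at this; simpa using this.symm
      | cons b lm' => exact ⟨b, lm', rfl⟩
    obtain ⟨c, lt', hst⟩ : ∃ c lt', Multiset.sort t (· ≤ ·) = c :: lt' := by
      cases hst : Multiset.sort t (· ≤ ·) with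
      | nil =>
        exfalso; apply ht0
        have := Multiset.sort_eq t (· ≤ ·)
        rw [hst] at this; simpa using this.symm
      | cons c lt' => exact ⟨c, lt', rfl⟩
    have hmeq : m = b ::ₘ (↑lm' : Multiset α) := by
      have := Multiset.sort_eq m (· ≤ ·)
      rw [hsm] at this
      exact this.symm
    have hteq : t = c ::ₘ (↑lt' : Multiset α) := by
      have := Multiset.sort_eq t (· ≤ ·)
      rw [hst] at this
      exact this.symm
    have hsortm : List.Pairwise (· ≤ ·) (b :: lm') := hsm ▸ Multiset.pairwise_sort m _
    have hsortt : List.Pairwise (· ≤ ·) (c :: lt') := hst ▸ Multiset.pairwise_sort t _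
    have hc_all : ∀ x ∈ (↑lt' : Multiset α), c ≤ x := by
      intro x hx
      exact (List.pairwise_cons.mp hsortt).1 x (by simpa using hx)
    have hbc : b ≤ c := by
      have hcm : c ∈ m := Multiset.mem_of_le ht (hteq ▸ Multiset.mem_cons_self c _)
      have hcs : c ∈ Multiset.sort m (· ≤ ·) := (Multiset.mem_sort _).mpr hcm
      rw [hsm] at hcs
      rcases List.mem_cons.mp hcs with rfl | hcs
      · exact le_refl c
      · exact (List.pairwise_cons.mp hsortm).1 c hcs
    have hle' : (↑lt' : Multiset α) ≤ (↑lm' : Multiset α) := by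
      refine tail_le_tail (b := b) (c := c) ?_ hbc hc_all
      rw [← hteq, ← hmeq]; exact ht
    have hcardm' : Multiset.card (↑lm' : Multiset α) ≤ N := by
      have h1 : Multiset.card m = lm'.length + 1 := by rw [hmeq]; simp
      have h2 : Multiset.card (↑lm' : Multiset α) = lm'.length := by simp
      omega
    have hIH := ih (↑lt' : Multiset α) (↑lm' : Multiset α) hcardm' hle'
    have hlm'sort : Multiset.sort (↑lm' : Multiset α) (· ≤ ·) = lm' :=
      sort_coe_of_sorted (List.Pairwise.of_cons hsortm)
    rw [hlm'sort] at hIH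
    have hcardt : Multiset.card t = lt'.length + 1 := by rw [hteq]; simp
    rw [hsm, hcardt, hteq]
    simp only [List.take_succ_cons, List.sum_cons, Multiset.sum_cons]
    have hcard' : Multiset.card (↑lt' : Multiset α) = lt'.length := by simp
    rw [hcard'] at hIH
    have hsum' : (↑lt' : Multiset α).sum = lt'.sum := by simp
    rw [hsum'] at hIH
    exact add_le_add hbc hIH

/-- The prefix sum of the sorted list is achieved by some submultiset. -/
lemma exists_le_preSum {α : Type*} [AddCommMonoid α] [LinearOrder α] [IsOrderedAddMonoid α] (m : Multiset α) (k : ℕ)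
    (hk : k ≤ Multiset.card m) :
    ∃ t : Multiset α, t ≤ m ∧ Multiset.card t = k ∧
      t.sum = ((Multiset.sort m (· ≤ ·)).take k).sum := by
  refine ⟨↑((Multiset.sort m (· ≤ ·)).take k), ?_, ?_, ?_⟩
  · calc (↑((Multiset.sort m (· ≤ ·)).take k) : Multiset α)
        ≤ ↑(Multiset.sort m (· ≤ ·)) := (List.take_sublist _ _).subperm
      _ = m := Multiset.sort_eq _ _
  · simp [List.length_take, Multiset.length_sort, hk]
  · simp

lemma exists_map_of_le_map {α β : Type*} [DecidableEq β] {f : α → β} {s : Multiset α}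
    {t : Multiset β} (h : t ≤ Multiset.map f s) : ∃ s' ≤ s, Multiset.map f s' = t := by
  induction s using Multiset.induction_on generalizing t with
  | empty =>
    refine ⟨0, le_refl _, ?_⟩
    simpa using (Multiset.le_zero.mp (by simpa using h)).symm
  | cons a s ih =>
    rw [Multiset.map_cons] at h
    by_cases hfa : f a ∈ t
    · have h' : t.erase (f a) ≤ Multiset.map f s := by
        have := Multiset.erase_le_erase (f a) h
        rwa [Multiset.erase_cons_head] at this
      obtain ⟨s', hs', hmap⟩ := ih h'
      refine ⟨a ::ₘ s', Multiset.cons_le_cons a hs', ?_⟩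
      rw [Multiset.map_cons, hmap, Multiset.cons_erase hfa]
    · have h' : t ≤ Multiset.map f s := by
        rw [Multiset.le_iff_count] at h ⊢
        intro x
        rcases eq_or_ne x (f a) with rfl | hx
        · simp [Multiset.count_eq_zero_of_notMem hfa]
        · have := h x
          rwa [Multiset.count_cons_of_ne hx] at this
      obtain ⟨s', hs', hmap⟩ := ih h'
      exact ⟨s', le_trans hs' (Multiset.le_cons_self s a), hmap⟩

lemma ofFn_coe_eq_map {n : ℕ} {α : Type*} (u : Fin n → α) :
    (↑(List.ofFn u) : Multiset α) = Multiset.map u Finset.univ.val := by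
  rw [List.ofFn_eq_map]; rfl

theorem augmented_lorenz_dominating_implies_original {G : Type*} [DecidableEq G]
    [Fintype G] {n : ℕ} (hn : 2 ≤ n)
    (v : Fin n → Finset G → ℕ) (hv : ∀ i, IsMRF (v i))
    (π : Equiv.Perm (Fin n)) (X : Fin n → Finset G) (hX : IsAlloc X)
    (hdom : ∀ Y : Fin n → Finset G, IsAlloc Y →
      LorenzDomQ (augUtil v π X) (augUtil v π Y)) :
    ∀ Y : Fin n → Finset G, IsAlloc Y →
      LorenzDom (fun i => v i (X i)) (fun i => v i (Y i)) := by
  intro Y hY k hk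
  have hQ := hdom Y hY k hk
  set uX : Fin n → ℕ := fun i => v i (X i) with huX
  set uY : Fin n → ℕ := fun i => v i (Y i) with huY
  set ε : Fin n → ℚ := fun i => ((π i : ℕ) + 1) / (n ^ 2 : ℚ) with hε
  have hnpos : (0:ℚ) < (n:ℚ) ^ 2 := by
    have : (0:ℚ) < (n:ℚ) := by exact_mod_cast lt_of_lt_of_le (by norm_num) hn
    positivity
  have hε0 : ∀ i, 0 ≤ ε i := by
    intro i
    apply div_nonneg _ hnpos.le
    positivity
  -- sum of all perturbations is < 1
  have hεsum : ∑ i : Fin n, ε i < 1 := by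
    rw [← Finset.sum_div]
    rw [div_lt_one hnpos]
    have hlt : ∑ i : Fin n, (((π i : ℕ) : ℚ) + 1) < ∑ _i : Fin n, (n : ℚ) := by
      apply Finset.sum_lt_sum
      · intro i _
        have : (π i : ℕ) < n := (π i).is_lt
        have : ((π i : ℕ) : ℚ) + 1 ≤ (n : ℚ) := by exact_mod_cast this
        exact this
      · refine ⟨π.symm ⟨0, by omega⟩, Finset.mem_univ _, ?_⟩
        rw [Equiv.apply_symm_apply]
        simp only [Fin.val_mk, Nat.cast_zero, zero_add]
        exact_mod_cast by omega
    calc ∑ i : Fin n, (((π i : ℕ) : ℚ) + 1) < ∑ _i : Fin n, (n : ℚ) := hlt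
      _ = (n : ℚ) * n := by simp [Finset.sum_const, mul_comm]
      _ = (n : ℚ) ^ 2 := by ring
  -- The multisets involved
  have hcardX : Multiset.card (Multiset.map uX Finset.univ.val) = n := by simp
  have hcardAugY : Multiset.card (Multiset.map (augUtil v π Y) Finset.univ.val) = n := by simp
  -- X side: a Finset T of size k achieving the nat prefix sum for X
  obtain ⟨t, htm, htc, hts⟩ :=
    exists_le_preSum (Multiset.map uX Finset.univ.val) k (by rw [hcardX]; exact hk)
  obtain ⟨sX, hsX, hmapX⟩ := exists_map_of_le_map htm
  have hndX : sX.Nodup := Multiset.nodup_of_le hsX Finset.univ.nodup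
  set T : Finset (Fin n) := ⟨sX, hndX⟩ with hT
  have hTsub : T ⊆ Finset.univ := Finset.subset_univ T
  have hTcard : Multiset.card sX = k := by
    have : Multiset.card (Multiset.map uX sX) = k := by rw [hmapX, htc]
    simpa using this
  have hTsumNat : ∑ i ∈ T, uX i = ((sortedAsc uX).take k).sum := by
    have : ∑ i ∈ T, uX i = (Multiset.map uX sX).sum := rfl
    rw [this, hmapX, hts]
    rw [sortedAsc, ofFn_coe_eq_map]
  -- Y side: the augmented prefix sum for Y is achieved by a Finset S of size k
  obtain ⟨tq, htqm, htqc, htqs⟩ :=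
    exists_le_preSum (Multiset.map (augUtil v π Y) Finset.univ.val) k (by rw [hcardAugY]; exact hk)
  obtain ⟨sY, hsY, hmapY⟩ := exists_map_of_le_map htqm
  have hndY : sY.Nodup := Multiset.nodup_of_le hsY Finset.univ.nodup
  set S : Finset (Fin n) := ⟨sY, hndY⟩ with hS
  have hScard : Multiset.card sY = k := by
    have : Multiset.card (Multiset.map (augUtil v π Y) sY) = k := by rw [hmapY, htqc]
    simpa using this
  have hSsum : ∑ i ∈ S, augUtil v π Y i = ((sortedAscQ (augUtil v π Y)).take k).sum := by
    have : ∑ i ∈ S, augUtil v π Y i = (Multiset.map (augUtil v π Y) sY).sum := rfl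
    rw [this, hmapY, htqs]
    rw [sortedAscQ, ofFn_coe_eq_map]
  -- Key inequality 1: nat prefix sum for Y ≤ augmented prefix sum for Y (in ℚ)
  have h1 : (((sortedAsc uY).take k).sum : ℚ) ≤ ((sortedAscQ (augUtil v π Y)).take k).sum := by
    rw [← hSsum]
    have hnat : ((sortedAsc uY).take k).sum ≤ ∑ i ∈ S, uY i := by
      have hle : Multiset.map uY sY ≤ Multiset.map uY Finset.univ.val :=
        Multiset.map_le_map hsY
      have := preSum_le n (Multiset.map uY sY) (Multiset.map uY Finset.univ.val)
        (by simp) hle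
      have hc : Multiset.card (Multiset.map uY sY) = k := by simpa using hScard
      rw [hc] at this
      have heq : (Multiset.map uY sY).sum = ∑ i ∈ S, uY i := rfl
      rw [heq] at this
      rw [sortedAsc, ofFn_coe_eq_map]
      exact this
    calc (((sortedAsc uY).take k).sum : ℚ) ≤ ((∑ i ∈ S, uY i : ℕ) : ℚ) := by exact_mod_cast hnat
      _ = ∑ i ∈ S, (uY i : ℚ) := by push_cast; rfl
      _ ≤ ∑ i ∈ S, augUtil v π Y i := by
          apply Finset.sum_le_sum
          intro i _
          show (uY i : ℚ) ≤ (uY i : ℚ) + ε i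
          linarith [hε0 i]
  -- Key inequality 2: augmented prefix sum for X < nat prefix sum for X + 1 (in ℚ)
  have h2 : ((sortedAscQ (augUtil v π X)).take k).sum < (((sortedAsc uX).take k).sum : ℚ) + 1 := by
    have hle : Multiset.map (augUtil v π X) sX ≤ Multiset.map (augUtil v π X) Finset.univ.val :=
      Multiset.map_le_map hsX
    have hpre := preSum_le n (Multiset.map (augUtil v π X) sX)
      (Multiset.map (augUtil v π X) Finset.univ.val) (by simp) hle
    have hc : Multiset.card (Multiset.map (augUtil v π X) sX) = k := by simpa using hTcard
    rw [hc] at hpre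
    have heq : (Multiset.map (augUtil v π X) sX).sum = ∑ i ∈ T, augUtil v π X i := rfl
    rw [heq] at hpre
    have hsplit : ∑ i ∈ T, augUtil v π X i = (∑ i ∈ T, (uX i : ℚ)) + ∑ i ∈ T, ε i := by
      rw [← Finset.sum_add_distrib]
      rfl
    have hεT : ∑ i ∈ T, ε i < 1 := by
      calc ∑ i ∈ T, ε i ≤ ∑ i : Fin n, ε i :=
            Finset.sum_le_sum_of_subset_of_nonneg hTsub (fun i _ _ => hε0 i)
        _ < 1 := hεsum
    have hcast : ∑ i ∈ T, (uX i : ℚ) = (((sortedAsc uX).take k).sum : ℚ) := by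
      rw [← hTsumNat]; push_cast; rfl
    calc ((sortedAscQ (augUtil v π X)).take k).sum
        ≤ ∑ i ∈ T, augUtil v π X i := by
          rw [sortedAscQ, ofFn_coe_eq_map]; exact hpre
      _ = (∑ i ∈ T, (uX i : ℚ)) + ∑ i ∈ T, ε i := hsplit
      _ < (∑ i ∈ T, (uX i : ℚ)) + 1 := by linarith
      _ = (((sortedAsc uX).take k).sum : ℚ) + 1 := by rw [hcast]
  -- Combine
  have hfinal : (((sortedAsc uY).take k).sum : ℚ) < (((sortedAsc uX).take k).sum : ℚ) + 1 :=
    lt_of_le_of_lt (le_trans h1 hQ) h2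
  have : ((sortedAsc uY).take k).sum < ((sortedAsc uX).take k).sum + 1 := by
    exact_mod_cast hfinal
  omega
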